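/- Let a ≥ b ≥ 2 be integers. Then both C(a+b−2, b−1) and C(a, b−1) are odd if and only if there exist integers m ≥ 0 and odd ℓ ≥ 3 with a = 2^m · ℓ and b = 2^m + 1. -/

import Mathlib

private lemma odd_choose_step (n k : ℕ) :
    Odd (n.choose k) ↔ Odd ((n % 2).choose (k % 2)) ∧ Odd ((n / 2).choose (k / 2)) := by
  have h := @Choose.choose_modEq_choose_mod_mul_choose_div_nat n k 2 ⟨Nat.prime_two⟩
  unfold Nat.ModEq at h
  rw [Nat.odd_iff, h, ← Nat.odd_iff, Nat.odd_mul]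

private lemma odd_choose_iff : ∀ n k : ℕ,
    Odd (n.choose k) ↔ ∀ i, k.testBit i = true → n.testBit i = true := by
  intro n
  induction n using Nat.strong_induction_on with
  | _ n IH =>
    intro k
    rcases Nat.eq_zero_or_pos n with rfl | hn
    · constructor
      · intro h i hk
        rcases Nat.eq_zero_or_pos k with rfl | hk'
        · simp at hk
        · rw [Nat.choose_eq_zero_of_lt hk'] at h
          exact absurd h (by simp [Nat.odd_iff])
      · intro h
        have : k = 0 := by
          apply Nat.zero_of_testBit_eq_false
          intro i
          by_contra hc
          have := h i (by simpa using hc)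
          simp [Nat.zero_testBit] at this
        simp [this]
    · rw [odd_choose_step, IH (n / 2) (by omega) (k / 2)]
      have hbit0 : Odd ((n % 2).choose (k % 2)) ↔ (k % 2 = 1 → n % 2 = 1) := by
        rcases Nat.mod_two_eq_zero_or_one n with h1 | h1 <;>
          rcases Nat.mod_two_eq_zero_or_one k with h2 | h2 <;>
          simp [h1, h2, Nat.odd_iff]
      constructor
      · rintro ⟨h0, hs⟩ i hk
        cases i with
        | zero =>
          rw [Nat.testBit_zero] at hk ⊢
          simp only [decide_eq_true_eq] at hk ⊢
          exact hbit0.mp h0 hk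
        | succ i =>
          rw [Nat.testBit_succ] at hk ⊢
          exact hs i hk
      · intro h
        refine ⟨hbit0.mpr ?_, fun i hk => ?_⟩
        · intro hk
          have := h 0 (by simp [Nat.testBit_zero, hk])
          simpa [Nat.testBit_zero] using this
        · have := h (i + 1) (by rwa [Nat.testBit_succ])
          rwa [Nat.testBit_succ] at this

private lemma odd_choose_add_iff : ∀ x y : ℕ,
    Odd ((x + y).choose y) ↔ ∀ i, ¬(x.testBit i = true ∧ y.testBit i = true) := by
  intro x
  induction x using Nat.strong_induction_on with
  | _ x IH =>
    intro y
    rcases Nat.eq_zero_or_pos x with rfl | hx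
    · simp [Nat.zero_testBit]
    · by_cases hpar : x % 2 = 1 ∧ y % 2 = 1
      · have hsum : (x + y) % 2 = 0 := by omega
        constructor
        · intro h
          rw [odd_choose_step, hsum, hpar.2] at h
          simpa [Nat.odd_iff] using h.1
        · intro h
          exact absurd ⟨by simp [Nat.testBit_zero, hpar.1], by simp [Nat.testBit_zero, hpar.2]⟩ (h 0)
      · have hdiv : (x + y) / 2 = x / 2 + y / 2 := by omega
        have hfirst : Odd (((x + y) % 2).choose (y % 2)) := by
          rcases Nat.mod_two_eq_zero_or_one y with h2 | h2
          · rw [h2]; simp [Nat.choose, Nat.odd_iff]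
          · have h1 : x % 2 = 0 := by
              rcases Nat.mod_two_eq_zero_or_one x with h1 | h1
              · exact h1
              · exact absurd ⟨h1, h2⟩ hpar
            have hs1 : (x + y) % 2 = 1 := by omega
            rw [hs1, h2]
            simp [Nat.odd_iff]
        rw [odd_choose_step, hdiv, IH (x / 2) (by omega) (y / 2)]
        constructor
        · rintro ⟨-, hs⟩ i
          cases i with
          | zero =>
            simp only [Nat.testBit_zero, decide_eq_true_eq]
            omega
          | succ i =>
            rw [Nat.testBit_succ, Nat.testBit_succ]
            exact hs i
        · intro h
          refine ⟨hfirst, fun i => ?_⟩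
          have := h (i + 1)
          rwa [Nat.testBit_succ, Nat.testBit_succ] at this

private lemma tb_low {j r : ℕ} (t : ℕ) (hr : r < 2 ^ j) {i : ℕ} (hij : i < j) :
    (2 ^ j * t + r).testBit i = r.testBit i := by
  have h1 : (2 ^ j * t + r) % 2 ^ j = r := by
    rw [Nat.mul_add_mod, Nat.mod_eq_of_lt hr]
  calc (2 ^ j * t + r).testBit i
      = ((2 ^ j * t + r) % 2 ^ j).testBit i := by
        rw [Nat.testBit_mod_two_pow]; simp [hij]
    _ = r.testBit i := by rw [h1]

private lemma tb_high {j r : ℕ} (t : ℕ) (hr : r < 2 ^ j) (i : ℕ) :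
    (2 ^ j * t + r).testBit (j + i) = t.testBit i := by
  rw [Nat.testBit_eq_decide_div_mod_eq, Nat.testBit_eq_decide_div_mod_eq]
  have : (2 ^ j * t + r) / 2 ^ (j + i) = t / 2 ^ i := by
    rw [pow_add, ← Nat.div_div_eq_div_mul]
    congr 1
    rw [Nat.add_comm, Nat.mul_comm,
      Nat.add_mul_div_right _ _ (Nat.two_pow_pos j),
      Nat.div_eq_of_lt hr, Nat.zero_add]
  rw [this]

/-- All the bit facts about `a = 2^(m+1)*t + 2^m` and `a - 1`. -/
private lemma decomp_bits (m t : ℕ) :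
    (∀ i, i < m → (2 ^ (m+1) * t + 2 ^ m).testBit i = false) ∧
    (2 ^ (m+1) * t + 2 ^ m).testBit m = true ∧
    (∀ i, (2 ^ (m+1) * t + 2 ^ m).testBit (m + 1 + i) = t.testBit i) ∧
    (∀ i, i < m → (2 ^ (m+1) * t + 2 ^ m - 1).testBit i = true) ∧
    (2 ^ (m+1) * t + 2 ^ m - 1).testBit m = false ∧
    (∀ i, (2 ^ (m+1) * t + 2 ^ m - 1).testBit (m + 1 + i) = t.testBit i) := by
  have hpow : (2:ℕ) ^ m < 2 ^ (m+1) := by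
    rw [pow_succ]; have := Nat.two_pow_pos m; omega
  have hpos : 0 < (2:ℕ) ^ m := Nat.two_pow_pos m
  have hsub : 2 ^ (m+1) * t + 2 ^ m - 1 = 2 ^ (m+1) * t + (2 ^ m - 1) := by omega
  refine ⟨?_, ?_, ?_, ?_, ?_, ?_⟩
  · intro i hi
    rw [tb_low t hpow (by omega)]
    exact Nat.testBit_two_pow_of_ne (by omega)
  · rw [tb_low t hpow (by omega)]
    exact Nat.testBit_two_pow_self
  · intro i
    exact tb_high t hpow i
  · intro i hi
    rw [hsub, tb_low t (by omega) (by omega), Nat.testBit_two_pow_sub_one]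
    simp [hi]
  · rw [hsub, tb_low t (by omega) (by omega), Nat.testBit_two_pow_sub_one]
    simp
  · intro i
    rw [hsub]
    exact tb_high t (by omega) i

/-- For `a ≥ b ≥ 2`, both `C(a+b-2, b-1)` and `C(a, b-1)` are odd iff
`a = 2^m * ℓ` and `b = 2^m + 1` for some `m ≥ 0` and odd `ℓ ≥ 3`. -/
theorem odd_both_choose_iff (a b : ℕ) (hb : 2 ≤ b) (hab : b ≤ a) :
    (Odd ((a + b - 2).choose (b - 1)) ∧ Odd (a.choose (b - 1))) ↔
      ∃ m ℓ : ℕ, Odd ℓ ∧ 3 ≤ ℓ ∧ a = 2 ^ m * ℓ ∧ b = 2 ^ m + 1 := by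
  set k := b - 1 with hk
  have hk1 : 1 ≤ k := by omega
  have hsum : a + b - 2 = (a - 1) + k := by omega
  rw [hsum, odd_choose_add_iff, odd_choose_iff]
  constructor
  · rintro ⟨h1, h2⟩
    obtain ⟨m, ℓ, hℓodd, haml⟩ := Nat.exists_eq_two_pow_mul_odd (n := a) (by omega)
    obtain ⟨t, ht⟩ := hℓodd
    have ha2 : a = 2 ^ (m+1) * t + 2 ^ m := by rw [haml, ht, pow_succ]; ring
    obtain ⟨hlo, hm, hhi, hlo1, hm1, hhi1⟩ := decomp_bits m t
    rw [← ha2] at hlo hm hhi hlo1 hm1 hhi1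
    -- k has no bits except possibly at m
    have hknot : ∀ i, i ≠ m → k.testBit i = false := by
      intro i hi
      by_contra hc
      have hki : k.testBit i = true := by simpa using hc
      rcases lt_trichotomy i m with h | h | h
      · have := h2 i hki
        rw [hlo i h] at this
        exact absurd this (by simp)
      · exact hi h
      · obtain ⟨i', rfl⟩ : ∃ i', i = m + 1 + i' := ⟨i - (m+1), by omega⟩
        have hai := h2 _ hki
        rw [hhi i'] at hai
        have : (a-1).testBit (m+1+i') = true := by rw [hhi1 i']; exact hai
        exact h1 (m+1+i') ⟨this, hki⟩
    have hkm : k.testBit m = true := by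
      by_contra hc
      have : k = 0 := by
        apply Nat.zero_of_testBit_eq_false
        intro i
        by_cases hi : i = m
        · subst hi; simpa using hc
        · exact hknot i hi
      omega
    have hkval : k = 2 ^ m := by
      apply Nat.eq_of_testBit_eq
      intro i
      by_cases hi : i = m
      · subst hi; rw [hkm, Nat.testBit_two_pow_self]
      · rw [hknot i hi, Nat.testBit_two_pow_of_ne (Ne.symm hi)]
    have hbval : b = 2 ^ m + 1 := by omega
    have hl3 : 3 ≤ ℓ := by
      have hge : 2 ^ m + 1 ≤ a := by omega
      rw [haml] at hge
      have hpos : 0 < (2:ℕ) ^ m := Nat.two_pow_pos m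
      rcases Nat.lt_or_ge ℓ 2 with h | h
      · interval_cases ℓ <;> omega
      · omega
    exact ⟨m, ℓ, ⟨t, ht⟩, hl3, haml, hbval⟩
  · rintro ⟨m, ℓ, hℓodd, hℓ3, haml, hbval⟩
    obtain ⟨t, ht⟩ := hℓodd
    have ha2 : a = 2 ^ (m+1) * t + 2 ^ m := by rw [haml, ht, pow_succ]; ring
    obtain ⟨hlo, hm, hhi, hlo1, hm1, hhi1⟩ := decomp_bits m t
    rw [← ha2] at hlo hm hhi hlo1 hm1 hhi1
    have hkval : k = 2 ^ m := by omega
    constructor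
    · intro i
      rintro ⟨hai, hki⟩
      rw [hkval] at hki
      by_cases hi : i = m
      · subst hi; rw [hm1] at hai; exact absurd hai (by simp)
      · rw [Nat.testBit_two_pow_of_ne (Ne.symm hi)] at hki
        exact absurd hki (by simp)
    · intro i hki
      rw [hkval] at hki
      by_cases hi : i = m
      · subst hi; exact hm
      · rw [Nat.testBit_two_pow_of_ne (Ne.symm hi)] at hki
        exact absurd hki (by simp)
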